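/- Let d ≥ 1, let G_1,…,G_d̄ be a partition of {1,…,d} into nonempty disjoint groups, let α ∈ ℝ^d̄ have strictly positive entries, and let p, q, s, t ∈ [1,∞] satisfy 1/p + 1/q = 1 and 1/s + 1/t = 1. Fix β ∈ ℝ^d with β ≠ 0, e ∈ ℝ, and γ > 0, and consider V := e² + sup_{Δ ∈ ℝ^d} { (Δᵀβ)² − 2e·(Δᵀβ) − γ‖Δ‖_{α⁻¹-(q,t)}² } ∈ [0,∞]. Then: (i) if γ > ‖β‖_{α-(p,s)}², then V = e²·γ / (γ − ‖β‖_{α-(p,s)}²); (ii) if γ < ‖β‖_{α-(p,s)}², then V = +∞; (iii) if γ = ‖β‖_{α-(p,s)}² and e ≠ 0, then V = +∞. -/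

import Mathlib

open scoped ENNReal BigOperators
open MeasureTheory Filter

/-- The l_p norm (p ∈ [1,∞], with sup modification at p = ∞) of a finite real vector. -/
noncomputable def lpn (p : ℝ≥0∞) {ι : Type} [Fintype ι] (x : ι → ℝ) : ℝ :=
  ‖(WithLp.equiv p (ι → ℝ)).symm x‖

/-- The α-(p,s) groupwise norm: ‖x‖ = ( Σ_i α_i^s ‖x(G_i)‖_p^s )^{1/s}. -/
noncomputable def gnorm {d dbar : ℕ} (G : Fin dbar → Finset (Fin d)) (α : Fin dbar → ℝ)
    (p s : ℝ≥0∞) (x : Fin d → ℝ) : ℝ :=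
  lpn s (fun i => α i * lpn p (fun j : {k // k ∈ G i} => x j.1))

/-- G_1, …, G_d̄ form a partition of {1,…,d} into nonempty disjoint groups. -/
def IsPartition {d dbar : ℕ} (G : Fin dbar → Finset (Fin d)) : Prop :=
  (∀ i, (G i).Nonempty) ∧ (∀ i j, i ≠ j → Disjoint (G i) (G j)) ∧ (∀ k, ∃ i, k ∈ G i)

section helpers

variable {ι : Type} [Fintype ι] {p q : ℝ≥0∞}

lemma conj_cases {p q : ℝ≥0∞} (hp : 1 ≤ p) (hpq : 1 / p + 1 / q = 1) :
    (p = 1 ∧ q = ∞) ∨ (p = ∞ ∧ q = 1) ∨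
      (p ≠ ∞ ∧ q ≠ ∞ ∧ p.toReal.HolderConjugate q.toReal) := by
  have hpq' : p⁻¹ + q⁻¹ = 1 := by simpa [one_div] using hpq
  rcases eq_or_lt_of_le hp with h1 | h1
  · left
    refine ⟨h1.symm, ?_⟩
    have h0 : q⁻¹ = 0 := by
      have : (1 : ℝ≥0∞)⁻¹ + q⁻¹ = 1⁻¹ + 0 := by rw [← h1] at hpq'; simpa using hpq'
      exact (ENNReal.add_right_inj (by simp)).mp this
    simpa [ENNReal.inv_eq_zero] using h0
  rcases eq_or_ne p ∞ with h2 | h2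
  · right; left
    refine ⟨h2, ?_⟩
    rw [h2] at hpq'
    simp only [ENNReal.inv_top, zero_add] at hpq'
    exact ENNReal.inv_eq_one.mp hpq'
  · right; right
    have hq' : q ≠ ∞ := by
      intro hq'
      rw [hq'] at hpq'
      simp only [ENNReal.inv_top, add_zero] at hpq'
      exact h1.ne' (ENNReal.inv_eq_one.mp hpq')
    have hp0 : p ≠ 0 := by positivity
    have hq0 : q ≠ 0 := by
      intro h
      rw [h] at hpq'
      simp only [ENNReal.inv_zero] at hpq'
      exact (by simp : (1:ℝ≥0∞) ≠ ∞) (by rw [← hpq']; simp)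
    refine ⟨h2, hq', Real.holderConjugate_iff.mpr ⟨?_, ?_⟩⟩
    · exact (ENNReal.toReal_lt_toReal (by simp) h2).mpr h1 |>.trans_eq' (by simp)
    · have := congrArg ENNReal.toReal hpq'
      rw [ENNReal.toReal_add (by simp [hp0]) (by simp [hq0])] at this
      simpa [ENNReal.toReal_inv] using this

lemma lpn_eq_sum (h0 : 0 < p.toReal) (x : ι → ℝ) :
    lpn p x = (∑ i, |x i| ^ p.toReal) ^ (1 / p.toReal) := by
  simp [lpn, PiLp.norm_eq_sum h0, Real.norm_eq_abs]

lemma lpn_top (x : ι → ℝ) : lpn ∞ x = ⨆ i, |x i| := by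
  simp [lpn, PiLp.norm_eq_ciSup, Real.norm_eq_abs]

lemma lpn_one (x : ι → ℝ) : lpn 1 x = ∑ i, |x i| := by
  rw [lpn_eq_sum (by simp) x]; simp

lemma lpn_nonneg (hp : 1 ≤ p) (x : ι → ℝ) : 0 ≤ lpn p x := by
  haveI : Fact (1 ≤ p) := ⟨hp⟩
  exact norm_nonneg _

lemma lpn_smul (hp : 1 ≤ p) (c : ℝ) (x : ι → ℝ) :
    lpn p (fun i => c * x i) = |c| * lpn p x := by
  haveI : Fact (1 ≤ p) := ⟨hp⟩
  have : (fun i => c * x i) = c • x := by ext i; simp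
  rw [lpn, this, ← Real.norm_eq_abs]
  rw [show (WithLp.equiv p (ι → ℝ)).symm (c • x) = c • (WithLp.equiv p (ι → ℝ)).symm x from rfl]
  exact norm_smul c _

lemma lpn_pos (hp : 1 ≤ p) {x : ι → ℝ} (hx : x ≠ 0) : 0 < lpn p x := by
  haveI : Fact (1 ≤ p) := ⟨hp⟩
  apply norm_pos_iff.mpr
  intro h; apply hx
  have := congrArg (WithLp.equiv p (ι → ℝ)) h
  simpa using this

lemma abs_le_lpn_top (x : ι → ℝ) (i : ι) : |x i| ≤ lpn ∞ x := by
  rw [lpn_top]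
  exact le_ciSup (f := fun j => |x j|) (Set.Finite.bddAbove (Set.finite_range _)) i

lemma lpn_holder (hp : 1 ≤ p) (hpq : 1 / p + 1 / q = 1) (x y : ι → ℝ) :
    ∑ i, x i * y i ≤ lpn q x * lpn p y := by
  rcases conj_cases hp hpq with ⟨hp1, hq1⟩ | ⟨hp1, hq1⟩ | ⟨hp1, hq1, hc⟩
  · subst hp1; subst hq1
    calc ∑ i, x i * y i ≤ ∑ i, |x i| * |y i| := by
          refine Finset.sum_le_sum fun i _ => ?_
          rw [← abs_mul]; exact le_abs_self _
      _ ≤ ∑ i, lpn ∞ x * |y i| := by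
          refine Finset.sum_le_sum fun i _ => ?_
          exact mul_le_mul_of_nonneg_right (abs_le_lpn_top x i) (abs_nonneg _)
      _ = lpn ∞ x * lpn 1 y := by rw [← Finset.mul_sum, lpn_one]
  · subst hp1; subst hq1
    calc ∑ i, x i * y i ≤ ∑ i, |x i| * |y i| := by
          refine Finset.sum_le_sum fun i _ => ?_
          rw [← abs_mul]; exact le_abs_self _
      _ ≤ ∑ i, |x i| * lpn ∞ y := by
          refine Finset.sum_le_sum fun i _ => ?_
          exact mul_le_mul_of_nonneg_left (abs_le_lpn_top y i) (abs_nonneg _)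
      _ = lpn 1 x * lpn ∞ y := by rw [← Finset.sum_mul, lpn_one]
  · have := Real.inner_le_Lp_mul_Lq Finset.univ x y hc.symm
    rw [lpn_eq_sum hc.symm.pos x, lpn_eq_sum hc.pos y]
    exact this

lemma lpn_mono (hp : 1 ≤ p) {x y : ι → ℝ} (hx : ∀ i, 0 ≤ x i) (hxy : ∀ i, x i ≤ y i) :
    lpn p x ≤ lpn p y := by
  rcases eq_or_ne p ∞ with rfl | hptop
  · rw [lpn_top, lpn_top]
    refine Real.iSup_le (fun i => ?_) (Real.iSup_nonneg fun i => abs_nonneg _)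
    exact le_trans (by rw [abs_of_nonneg (hx i)]; exact (hxy i).trans (le_abs_self _))
      (le_ciSup (Set.Finite.bddAbove (Set.finite_range _)) i)
  · have h0 : 0 < p.toReal := ENNReal.toReal_pos (by positivity) hptop
    rw [lpn_eq_sum h0, lpn_eq_sum h0]
    apply Real.rpow_le_rpow (by positivity)
    · refine Finset.sum_le_sum fun i _ => ?_
      apply Real.rpow_le_rpow (abs_nonneg _) _ h0.le
      rw [abs_of_nonneg (hx i)]
      exact (hxy i).trans (le_abs_self _)
    · positivity

lemma lpn_zero (hq : 1 ≤ q) : lpn q (0 : ι → ℝ) = 0 := by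
  haveI : Fact (1 ≤ q) := ⟨hq⟩
  simpa [lpn] using norm_zero

lemma rsign_mul_self (t : ℝ) : Real.sign t * t = |t| := by
  rcases lt_trichotomy t 0 with h | h | h
  · rw [Real.sign_of_neg h, abs_of_neg h]; ring
  · simp [h]
  · rw [Real.sign_of_pos h, abs_of_pos h]; ring

lemma rsign_abs_le (t : ℝ) : |Real.sign t| ≤ 1 := by
  rcases lt_trichotomy t 0 with h | h | h
  · rw [Real.sign_of_neg h]; norm_num
  · simp [h, Real.sign_zero]
  · rw [Real.sign_of_pos h]; norm_num

lemma rsign_abs_eq_one {t : ℝ} (h : t ≠ 0) : |Real.sign t| = 1 := by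
  rcases lt_trichotomy t 0 with h' | h' | h'
  · rw [Real.sign_of_neg h']; norm_num
  · exact absurd h' h
  · rw [Real.sign_of_pos h']; norm_num

lemma rsign_nonneg {t : ℝ} (h : 0 ≤ t) : 0 ≤ Real.sign t := by
  rcases eq_or_lt_of_le h with h' | h'
  · simp [← h', Real.sign_zero]
  · rw [Real.sign_of_pos h']; norm_num

lemma lpn_attain (hp : 1 ≤ p) (hq : 1 ≤ q) (hpq : 1 / p + 1 / q = 1) (y : ι → ℝ) :
    ∃ x : ι → ℝ, lpn q x ≤ 1 ∧ ∑ i, x i * y i = lpn p y ∧ ∀ i, 0 ≤ y i → 0 ≤ x i := by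
  classical
  by_cases hy : y = 0
  · refine ⟨0, by rw [lpn_zero hq]; norm_num, by simp [hy, lpn_zero hp], by simp⟩
  rcases conj_cases hp hpq with ⟨hp1, hq1⟩ | ⟨hp1, hq1⟩ | ⟨hp1, hq1, hc⟩
  · subst hp1; subst hq1
    refine ⟨fun i => Real.sign (y i), ?_, ?_, fun i hi => rsign_nonneg hi⟩
    · rw [lpn_top]
      exact Real.iSup_le (fun i => rsign_abs_le _) zero_le_one
    · rw [lpn_one]
      exact Finset.sum_congr rfl fun i _ => rsign_mul_self _
  · subst hp1; subst hq1
    obtain ⟨i1, hi1⟩ := Function.ne_iff.mp hy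
    obtain ⟨i0, -, hmax⟩ := Finset.exists_max_image Finset.univ (fun i => |y i|)
      ⟨i1, Finset.mem_univ i1⟩
    refine ⟨fun i => if i = i0 then Real.sign (y i0) else 0, ?_, ?_, ?_⟩
    · rw [lpn_one]
      calc ∑ i, |if i = i0 then Real.sign (y i0) else 0|
          = ∑ i, if i = i0 then |Real.sign (y i0)| else 0 := by
            refine Finset.sum_congr rfl fun i _ => ?_; split <;> simp
        _ = |Real.sign (y i0)| := by rw [Finset.sum_ite_eq']; simp
        _ ≤ 1 := rsign_abs_le _
    · have h1 : ∑ i, (if i = i0 then Real.sign (y i0) else 0) * y i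
          = Real.sign (y i0) * y i0 := by
        rw [Finset.sum_eq_single i0]
        · simp
        · intro b _ hb; simp [hb]
        · intro h; exact absurd (Finset.mem_univ i0) h
      rw [h1, rsign_mul_self, lpn_top]
      refine le_antisymm ?_ ?_
      · exact le_ciSup (f := fun j => |y j|) (Set.Finite.bddAbove (Set.finite_range _)) i0
      · exact Real.iSup_le (fun i => hmax i (Finset.mem_univ i)) (abs_nonneg _)
    · intro i hi
      by_cases h : i = i0
      · subst h; simp only [if_pos rfl]; exact rsign_nonneg hi
      · simp [h]
  · set P := p.toReal with hP
    set Q := q.toReal with hQ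
    set B := lpn p y with hBdef
    have hB : 0 < B := lpn_pos hp hy
    have hsum_nonneg : (0:ℝ) ≤ ∑ i, |y i| ^ P :=
      Finset.sum_nonneg fun i _ => Real.rpow_nonneg (abs_nonneg _) _
    have hBP : B ^ P = ∑ i, |y i| ^ P := by
      rw [hBdef, lpn_eq_sum hc.pos, ← Real.rpow_mul hsum_nonneg,
        one_div_mul_cancel hc.ne_zero, Real.rpow_one]
    have hP1 : (0:ℝ) < P - 1 := sub_pos.mpr hc.lt
    have hBPne : B ^ P ≠ 0 := (Real.rpow_pos_of_pos hB P).ne'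
    have habs : ∀ i, |Real.sign (y i) * |y i| ^ (P - 1) / B ^ (P - 1)|
        = |y i| ^ (P - 1) / B ^ (P - 1) := by
      intro i
      rcases eq_or_ne (y i) 0 with h | h
      · simp [h, Real.zero_rpow hP1.ne']
      · rw [abs_div, abs_mul, rsign_abs_eq_one h, one_mul,
          abs_of_nonneg (Real.rpow_nonneg (abs_nonneg _) _),
          abs_of_pos (Real.rpow_pos_of_pos hB _)]
    refine ⟨fun i => Real.sign (y i) * |y i| ^ (P - 1) / B ^ (P - 1), ?_, ?_, ?_⟩
    · rw [lpn_eq_sum hc.symm.pos]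
      have hterm : ∀ i : ι, |Real.sign (y i) * |y i| ^ (P - 1) / B ^ (P - 1)| ^ Q
          = |y i| ^ P / B ^ P := by
        intro i
        rw [habs i, Real.div_rpow (Real.rpow_nonneg (abs_nonneg _) _)
          (Real.rpow_nonneg hB.le _), ← Real.rpow_mul (abs_nonneg _),
          ← Real.rpow_mul hB.le, hc.sub_one_mul_conj]
      rw [Finset.sum_congr rfl fun i _ => hterm i, ← Finset.sum_div, ← hBP,
        div_self hBPne, Real.one_rpow]
    · have hterm : ∀ i : ι, Real.sign (y i) * |y i| ^ (P - 1) / B ^ (P - 1) * y i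
          = |y i| ^ P / B ^ (P - 1) := by
        intro i
        rcases eq_or_ne (y i) 0 with h | h
        · simp [h, Real.zero_rpow hP1.ne', Real.zero_rpow hc.ne_zero]
        · have hpos : 0 < |y i| := abs_pos.mpr h
          have : Real.sign (y i) * |y i| ^ (P - 1) / B ^ (P - 1) * y i
              = (Real.sign (y i) * y i) * |y i| ^ (P - 1) / B ^ (P - 1) := by ring
          rw [this, rsign_mul_self]
          congr 1
          calc |y i| * |y i| ^ (P - 1) = |y i| ^ (1 + (P - 1)) := by
                rw [Real.rpow_add hpos, Real.rpow_one]
            _ = |y i| ^ P := by norm_num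
      rw [Finset.sum_congr rfl fun i _ => hterm i, ← Finset.sum_div, ← hBP,
        ← Real.rpow_sub hB]
      simp
    · intro i hi
      have h1 : 0 ≤ Real.sign (y i) := rsign_nonneg hi
      have h2 : (0:ℝ) ≤ |y i| ^ (P - 1) := Real.rpow_nonneg (abs_nonneg _) _
      have h3 : (0:ℝ) < B ^ (P - 1) := Real.rpow_pos_of_pos hB _
      positivity

end helpers

section grp
variable {d dbar : ℕ} {G : Fin dbar → Finset (Fin d)} {α : Fin dbar → ℝ}
  {p q s t : ℝ≥0∞}

lemma partition_sum (hG : IsPartition G) (f : Fin d → ℝ) :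
    ∑ k, f k = ∑ i, ∑ k ∈ G i, f k := by
  classical
  have huniv : (Finset.univ : Finset (Fin d)) = Finset.univ.biUnion G := by
    ext k
    simp only [Finset.mem_univ, Finset.mem_biUnion, true_iff, true_and]
    exact hG.2.2 k
  rw [show ∑ k, f k = ∑ k ∈ Finset.univ.biUnion G, f k from by rw [← huniv]]
  exact Finset.sum_biUnion fun i _ j _ hij => hG.2.1 i j hij

lemma gnorm_nonneg (ht : 1 ≤ t) (a : Fin dbar → ℝ) (x : Fin d → ℝ) :
    0 ≤ gnorm G a q t x := lpn_nonneg ht _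

lemma gnorm_smul (hq : 1 ≤ q) (ht : 1 ≤ t) (a : Fin dbar → ℝ) (c : ℝ)
    (x : Fin d → ℝ) : gnorm G a q t (fun k => c * x k) = |c| * gnorm G a q t x := by
  unfold gnorm
  have h : (fun i => a i * lpn q (fun j : {k // k ∈ G i} => (fun k => c * x k) j.1))
      = fun i => |c| * (a i * lpn q (fun j : {k // k ∈ G i} => x j.1)) := by
    ext i
    rw [lpn_smul hq c (fun j : {k // k ∈ G i} => x j.1)]
    ring
  rw [h, lpn_smul ht, abs_abs]

lemma gnorm_holder (hG : IsPartition G) (hα : ∀ i, 0 < α i)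
    (hp : 1 ≤ p) (hq : 1 ≤ q) (hs : 1 ≤ s) (ht : 1 ≤ t)
    (hpq : 1 / p + 1 / q = 1) (hst : 1 / s + 1 / t = 1) (Δ β : Fin d → ℝ) :
    ∑ k, Δ k * β k ≤ gnorm G (fun i => (α i)⁻¹) q t Δ * gnorm G α p s β := by
  rw [partition_sum hG]
  calc ∑ i, ∑ k ∈ G i, Δ k * β k
      ≤ ∑ i, ((α i)⁻¹ * lpn q (fun j : {k // k ∈ G i} => Δ j.1)) *
          (α i * lpn p (fun j : {k // k ∈ G i} => β j.1)) := by
        refine Finset.sum_le_sum fun i _ => ?_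
        have h1 : ∑ k ∈ G i, Δ k * β k
            = ∑ j : {k // k ∈ G i}, Δ j.1 * β j.1 := (Finset.sum_coe_sort (G i) _).symm
        rw [h1]
        have h2 := lpn_holder hp hpq (fun j : {k // k ∈ G i} => Δ j.1)
          (fun j : {k // k ∈ G i} => β j.1)
        calc ∑ j : {k // k ∈ G i}, Δ j.1 * β j.1 ≤ _ := h2
          _ = _ := by field_simp [(hα i).ne']
    _ ≤ lpn t (fun i => (α i)⁻¹ * lpn q (fun j : {k // k ∈ G i} => Δ j.1)) *
          lpn s (fun i => α i * lpn p (fun j : {k // k ∈ G i} => β j.1)) :=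
        lpn_holder hs hst _ _
    _ = _ := rfl

lemma gnorm_pos (hG : IsPartition G) (hα : ∀ i, 0 < α i) (hp : 1 ≤ p) (hs : 1 ≤ s)
    {β : Fin d → ℝ} (hβ : β ≠ 0) : 0 < gnorm G α p s β := by
  obtain ⟨k, hk⟩ := Function.ne_iff.mp hβ
  obtain ⟨i0, hi0⟩ := hG.2.2 k
  apply lpn_pos hs
  intro h
  have h0 : α i0 * lpn p (fun j : {k // k ∈ G i0} => β j.1) = 0 := congrFun h i0
  have h1 : (fun j : {k // k ∈ G i0} => β j.1) ≠ 0 := by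
    intro h'
    exact hk (congrFun h' ⟨k, hi0⟩)
  have h2 : 0 < α i0 * lpn p (fun j : {k // k ∈ G i0} => β j.1) :=
    mul_pos (hα i0) (lpn_pos hp h1)
  exact absurd h0 h2.ne'

lemma gnorm_attain (hG : IsPartition G) (hα : ∀ i, 0 < α i)
    (hp : 1 ≤ p) (hq : 1 ≤ q) (hs : 1 ≤ s) (ht : 1 ≤ t)
    (hpq : 1 / p + 1 / q = 1) (hst : 1 / s + 1 / t = 1) (β : Fin d → ℝ) :
    ∃ Δ : Fin d → ℝ, gnorm G (fun i => (α i)⁻¹) q t Δ ≤ 1 ∧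
      ∑ k, Δ k * β k = gnorm G α p s β := by
  classical
  -- outer attainment
  set Y : Fin dbar → ℝ := fun i => α i * lpn p (fun j : {k // k ∈ G i} => β j.1) with hY
  have hYnn : ∀ i, 0 ≤ Y i := fun i => mul_nonneg (hα i).le (lpn_nonneg hp _)
  obtain ⟨u, hu1, hu2, hu3⟩ := lpn_attain hs ht hst Y
  have hunn : ∀ i, 0 ≤ u i := fun i => hu3 i (hYnn i)
  -- inner attainment per group
  have hv : ∀ i : Fin dbar, ∃ v : {k // k ∈ G i} → ℝ, lpn q v ≤ 1 ∧
      ∑ j, v j * β j.1 = lpn p (fun j : {k // k ∈ G i} => β j.1) := by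
    intro i
    obtain ⟨v, h1, h2, -⟩ := lpn_attain hp hq hpq (fun j : {k // k ∈ G i} => β j.1)
    exact ⟨v, h1, h2⟩
  choose v hv1 hv2 using hv
  have hvnn : ∀ i, 0 ≤ lpn q (v i) := fun i => lpn_nonneg hq _
  have hΔ : ∀ (i : Fin dbar) (k : Fin d) (h : k ∈ G i),
      (∑ i', if h' : k ∈ G i' then α i' * u i' * v i' ⟨k, h'⟩ else 0)
        = α i * u i * v i ⟨k, h⟩ := by
    intro i k h
    rw [Finset.sum_eq_single i]
    · simp [h]
    · intro b _ hb
      rw [dif_neg]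
      intro hb'
      exact (Finset.disjoint_left.mp (hG.2.1 b i hb) hb') h
    · intro hmem; exact absurd (Finset.mem_univ i) hmem
  refine ⟨fun k => ∑ i, if h : k ∈ G i then α i * u i * v i ⟨k, h⟩ else 0, ?_, ?_⟩
  · unfold gnorm
    have hrestr : ∀ i : Fin dbar,
        (fun j : {k // k ∈ G i} => ∑ i', if h' : j.1 ∈ G i' then α i' * u i' * v i' ⟨j.1, h'⟩ else 0)
          = fun j : {k // k ∈ G i} => (α i * u i) * v i j := by
      intro i
      ext j
      rw [hΔ i j.1 j.2]
    have hkey : (fun i => (α i)⁻¹ * lpn q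
        (fun j : {k // k ∈ G i} => ∑ i', if h' : j.1 ∈ G i' then α i' * u i' * v i' ⟨j.1, h'⟩ else 0))
          = fun i => u i * lpn q (v i) := by
      ext i
      rw [hrestr i, lpn_smul hq, abs_of_nonneg (mul_nonneg (hα i).le (hunn i))]
      field_simp [(hα i).ne']
    rw [hkey]
    refine le_trans (lpn_mono ht (fun i => mul_nonneg (hunn i) (hvnn i)) (fun i => ?_)) hu1
    exact mul_le_of_le_one_right (hunn i) (hv1 i)
  · rw [partition_sum hG]
    have hgrp : ∀ i : Fin dbar,
        ∑ k ∈ G i, (∑ i', if h' : k ∈ G i' then α i' * u i' * v i' ⟨k, h'⟩ else 0) * β k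
          = u i * Y i := by
      intro i
      rw [← Finset.sum_coe_sort (G i)]
      have : ∀ j : {k // k ∈ G i},
          (∑ i', if h' : j.1 ∈ G i' then α i' * u i' * v i' ⟨j.1, h'⟩ else 0) * β j.1
            = (α i * u i) * (v i j * β j.1) := by
        intro j
        rw [hΔ i j.1 j.2]
        ring
      rw [Finset.sum_congr rfl fun j _ => this j, ← Finset.mul_sum, hv2 i, hY]
      ring
    rw [Finset.sum_congr rfl fun i _ => hgrp i, hu2]
    rfl

end grp

section quadsup
variable {ι : Type*}

lemma quadsup1 (N L : ι → ℝ) (B γ e : ℝ) (hγ : 0 < γ)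
    (hNnn : ∀ x, 0 ≤ N x)
    (hup : ∀ x, L x ^ 2 - 2 * e * L x - γ * N x ^ 2
      ≤ B ^ 2 * N x ^ 2 + 2 * |e| * B * N x - γ * N x ^ 2)
    (hlow : ∀ c : ℝ, 0 ≤ c → ∃ x, c ^ 2 * B ^ 2 + 2 * |e| * c * B - γ * c ^ 2
      ≤ L x ^ 2 - 2 * e * L x - γ * N x ^ 2)
    (hBnn : 0 ≤ B) (hlt : B ^ 2 < γ) :
    ENNReal.ofReal (e ^ 2) + (⨆ x, ENNReal.ofReal (L x ^ 2 - 2 * e * L x - γ * N x ^ 2))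
      = ENNReal.ofReal (e ^ 2 * γ / (γ - B ^ 2)) := by
  have hγB : 0 < γ - B ^ 2 := by linarith
  have hMnn : 0 ≤ e ^ 2 * B ^ 2 / (γ - B ^ 2) := div_nonneg (by positivity) hγB.le
  have hS : (⨆ x, ENNReal.ofReal (L x ^ 2 - 2 * e * L x - γ * N x ^ 2))
      = ENNReal.ofReal (e ^ 2 * B ^ 2 / (γ - B ^ 2)) := by
    refine le_antisymm (iSup_le fun x => ENNReal.ofReal_le_ofReal ?_) ?_
    · refine le_trans (hup x) ?_
      rw [le_div_iff₀ hγB]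
      nlinarith [sq_nonneg ((γ - B ^ 2) * N x - |e| * B), sq_abs e, hNnn x]
    · have hcnn : 0 ≤ |e| * B / (γ - B ^ 2) := div_nonneg (by positivity) hγB.le
      obtain ⟨x, hx⟩ := hlow _ hcnn
      have hceq : |e| * B / (γ - B ^ 2) * (γ - B ^ 2) = |e| * B := by field_simp
      have hMle : e ^ 2 * B ^ 2 / (γ - B ^ 2)
          ≤ (|e| * B / (γ - B ^ 2)) ^ 2 * B ^ 2 + 2 * |e| * (|e| * B / (γ - B ^ 2)) * B
            - γ * (|e| * B / (γ - B ^ 2)) ^ 2 := by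
        rw [div_le_iff₀ hγB]
        refine le_of_eq ?_
        calc e ^ 2 * B ^ 2 = (|e| * B) ^ 2 := by rw [mul_pow, sq_abs]
          _ = 2 * (|e| * B / (γ - B ^ 2) * (γ - B ^ 2)) * (|e| * B)
              - (|e| * B / (γ - B ^ 2) * (γ - B ^ 2)) ^ 2 := by rw [hceq]; ring
          _ = _ := by ring
      exact le_trans (ENNReal.ofReal_le_ofReal (le_trans hMle hx)) (le_iSup (fun x => ENNReal.ofReal (L x ^ 2 - 2 * e * L x - γ * N x ^ 2)) x)
  rw [hS, ← ENNReal.ofReal_add (sq_nonneg e) hMnn]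
  congr 1
  field_simp
  ring

lemma quadsup2 (N L : ι → ℝ) (B γ e : ℝ)
    (hlow : ∀ c : ℝ, 0 ≤ c → ∃ x, c ^ 2 * B ^ 2 + 2 * |e| * c * B - γ * c ^ 2
      ≤ L x ^ 2 - 2 * e * L x - γ * N x ^ 2)
    (hBnn : 0 ≤ B) (hgt : γ < B ^ 2) :
    ENNReal.ofReal (e ^ 2) + (⨆ x, ENNReal.ofReal (L x ^ 2 - 2 * e * L x - γ * N x ^ 2))
      = ⊤ := by
  have hBγ : 0 < B ^ 2 - γ := by linarith
  rw [ENNReal.add_eq_top]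
  right
  rw [iSup_eq_top]
  intro b hb
  have hc1 : (1:ℝ) ≤ max 1 ((b.toReal + 1) / (B ^ 2 - γ)) := le_max_left _ _
  have hc0 : (0:ℝ) ≤ max 1 ((b.toReal + 1) / (B ^ 2 - γ)) := by linarith
  obtain ⟨x, hx⟩ := hlow _ hc0
  have h1 : (b.toReal + 1) / (B ^ 2 - γ) ≤ max 1 ((b.toReal + 1) / (B ^ 2 - γ)) :=
    le_max_right _ _
  have h2 : b.toReal + 1 ≤ max 1 ((b.toReal + 1) / (B ^ 2 - γ)) * (B ^ 2 - γ) := by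
    rw [div_le_iff₀ hBγ] at h1
    linarith
  have h4 : max 1 ((b.toReal + 1) / (B ^ 2 - γ)) ≤ (max 1 ((b.toReal + 1) / (B ^ 2 - γ))) ^ 2 := by
    nlinarith
  have h5 : max 1 ((b.toReal + 1) / (B ^ 2 - γ)) * (B ^ 2 - γ)
      ≤ (max 1 ((b.toReal + 1) / (B ^ 2 - γ))) ^ 2 * (B ^ 2 - γ) :=
    mul_le_mul_of_nonneg_right h4 hBγ.le
  have h6 : 0 ≤ 2 * |e| * max 1 ((b.toReal + 1) / (B ^ 2 - γ)) * B := by positivity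
  have h3 : b.toReal < L x ^ 2 - 2 * e * L x - γ * N x ^ 2 := by
    nlinarith
  exact ⟨x, (ENNReal.lt_ofReal_iff_toReal_lt hb.ne).mpr h3⟩

lemma quadsup3 (N L : ι → ℝ) (B γ e : ℝ)
    (hlow : ∀ c : ℝ, 0 ≤ c → ∃ x, c ^ 2 * B ^ 2 + 2 * |e| * c * B - γ * c ^ 2
      ≤ L x ^ 2 - 2 * e * L x - γ * N x ^ 2)
    (hBpos : 0 < B) (heq : γ = B ^ 2) (he : e ≠ 0) :
    ENNReal.ofReal (e ^ 2) + (⨆ x, ENNReal.ofReal (L x ^ 2 - 2 * e * L x - γ * N x ^ 2))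
      = ⊤ := by
  have heB : 0 < 2 * |e| * B := by
    have : 0 < |e| := abs_pos.mpr he
    positivity
  rw [ENNReal.add_eq_top]
  right
  rw [iSup_eq_top]
  intro b hb
  have hc0 : (0:ℝ) ≤ max 0 ((b.toReal + 1) / (2 * |e| * B)) := le_max_left _ _
  obtain ⟨x, hx⟩ := hlow _ hc0
  have h1 : (b.toReal + 1) / (2 * |e| * B) ≤ max 0 ((b.toReal + 1) / (2 * |e| * B)) :=
    le_max_right _ _
  have h2 : b.toReal + 1 ≤ max 0 ((b.toReal + 1) / (2 * |e| * B)) * (2 * |e| * B) := by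
    rw [div_le_iff₀ heB] at h1
    linarith
  subst heq
  have h3 : b.toReal < L x ^ 2 - 2 * e * L x - B ^ 2 * N x ^ 2 := by
    nlinarith
  exact ⟨x, (ENNReal.lt_ofReal_iff_toReal_lt hb.ne).mpr h3⟩

end quadsup

theorem statement7 {d dbar : ℕ} (hd : 1 ≤ d)
    (G : Fin dbar → Finset (Fin d)) (hG : IsPartition G)
    (α : Fin dbar → ℝ) (hα : ∀ i, 0 < α i)
    (p q s t : ℝ≥0∞) (hp : 1 ≤ p) (hq : 1 ≤ q) (hs : 1 ≤ s) (ht : 1 ≤ t)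
    (hpq : 1 / p + 1 / q = 1) (hst : 1 / s + 1 / t = 1)
    (β : Fin d → ℝ) (hβ : β ≠ 0) (e γ : ℝ) (hγ : 0 < γ) :
    ((gnorm G α p s β) ^ 2 < γ →
      ENNReal.ofReal (e ^ 2) +
          (⨆ Δ : Fin d → ℝ, ENNReal.ofReal
            ((∑ k, Δ k * β k) ^ 2 - 2 * e * (∑ k, Δ k * β k) -
              γ * (gnorm G (fun i => (α i)⁻¹) q t Δ) ^ 2))
        = ENNReal.ofReal (e ^ 2 * γ / (γ - (gnorm G α p s β) ^ 2))) ∧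
    (γ < (gnorm G α p s β) ^ 2 →
      ENNReal.ofReal (e ^ 2) +
          (⨆ Δ : Fin d → ℝ, ENNReal.ofReal
            ((∑ k, Δ k * β k) ^ 2 - 2 * e * (∑ k, Δ k * β k) -
              γ * (gnorm G (fun i => (α i)⁻¹) q t Δ) ^ 2))
        = ⊤) ∧
    (γ = (gnorm G α p s β) ^ 2 → e ≠ 0 →
      ENNReal.ofReal (e ^ 2) +
          (⨆ Δ : Fin d → ℝ, ENNReal.ofReal
            ((∑ k, Δ k * β k) ^ 2 - 2 * e * (∑ k, Δ k * β k) -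
              γ * (gnorm G (fun i => (α i)⁻¹) q t Δ) ^ 2))
        = ⊤) := by
  have hBpos : 0 < gnorm G α p s β := gnorm_pos hG hα hp hs hβ
  have hNnn : ∀ Δ : Fin d → ℝ, 0 ≤ gnorm G (fun i => (α i)⁻¹) q t Δ :=
    fun Δ => gnorm_nonneg ht _ _
  have hhold : ∀ Δ : Fin d → ℝ,
      ∑ k, Δ k * β k ≤ gnorm G (fun i => (α i)⁻¹) q t Δ * gnorm G α p s β :=
    fun Δ => gnorm_holder hG hα hp hq hs ht hpq hst Δ β
  have habs : ∀ Δ : Fin d → ℝ,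
      |∑ k, Δ k * β k| ≤ gnorm G (fun i => (α i)⁻¹) q t Δ * gnorm G α p s β := by
    intro Δ
    rw [abs_le]
    refine ⟨?_, hhold Δ⟩
    have h2 := hhold (fun k => (-1) * Δ k)
    have hL2 : ∑ k, ((-1) * Δ k) * β k = -(∑ k, Δ k * β k) := by
      rw [← Finset.sum_neg_distrib]
      exact Finset.sum_congr rfl fun k _ => by ring
    have hN2 : gnorm G (fun i => (α i)⁻¹) q t (fun k => (-1) * Δ k)
        = gnorm G (fun i => (α i)⁻¹) q t Δ := by
      rw [gnorm_smul hq ht]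
      norm_num
    rw [hL2, hN2] at h2
    linarith
  obtain ⟨Δs, hΔs1, hΔs2⟩ := gnorm_attain hG hα hp hq hs ht hpq hst β
  have hup : ∀ Δ : Fin d → ℝ,
      (∑ k, Δ k * β k) ^ 2 - 2 * e * (∑ k, Δ k * β k)
          - γ * (gnorm G (fun i => (α i)⁻¹) q t Δ) ^ 2
        ≤ (gnorm G α p s β) ^ 2 * (gnorm G (fun i => (α i)⁻¹) q t Δ) ^ 2
          + 2 * |e| * (gnorm G α p s β) * (gnorm G (fun i => (α i)⁻¹) q t Δ)
          - γ * (gnorm G (fun i => (α i)⁻¹) q t Δ) ^ 2 := by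
    intro Δ
    have h1 := habs Δ
    have h0 := abs_nonneg (∑ k, Δ k * β k)
    have hNn := hNnn Δ
    have h2 : (∑ k, Δ k * β k) ^ 2
        ≤ (gnorm G (fun i => (α i)⁻¹) q t Δ) ^ 2 * (gnorm G α p s β) ^ 2 := by
      have := sq_abs (∑ k, Δ k * β k)
      nlinarith
    have h3 : -(2 * e * (∑ k, Δ k * β k))
        ≤ 2 * |e| * (gnorm G α p s β) * (gnorm G (fun i => (α i)⁻¹) q t Δ) := by
      calc -(2 * e * (∑ k, Δ k * β k)) ≤ |2 * e * (∑ k, Δ k * β k)| := neg_le_abs _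
        _ = 2 * |e| * |∑ k, Δ k * β k| := by rw [abs_mul, abs_mul]; norm_num
        _ ≤ 2 * |e| * (gnorm G (fun i => (α i)⁻¹) q t Δ * gnorm G α p s β) := by
            nlinarith [abs_nonneg e]
        _ = 2 * |e| * (gnorm G α p s β) * (gnorm G (fun i => (α i)⁻¹) q t Δ) := by ring
    nlinarith
  have hlow : ∀ c : ℝ, 0 ≤ c → ∃ Δ : Fin d → ℝ,
      c ^ 2 * (gnorm G α p s β) ^ 2 + 2 * |e| * c * (gnorm G α p s β) - γ * c ^ 2
        ≤ (∑ k, Δ k * β k) ^ 2 - 2 * e * (∑ k, Δ k * β k)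
          - γ * (gnorm G (fun i => (α i)⁻¹) q t Δ) ^ 2 := by
    intro c hc
    set ε : ℝ := if e ≤ 0 then 1 else -1 with hε
    have hε1 : |ε| = 1 := by rw [hε]; split <;> norm_num
    have hεsq : ε ^ 2 = 1 := by rw [hε]; split <;> norm_num
    have hεe : -(2 * e * ε) = 2 * |e| := by
      rw [hε]; split
      · next h => rw [abs_of_nonpos h]; ring
      · next h => rw [abs_of_pos (lt_of_not_ge h)]; ring
    refine ⟨fun k => (ε * c) * Δs k, ?_⟩
    have hLc : ∑ k, ((ε * c) * Δs k) * β k = ε * c * gnorm G α p s β := by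
      calc ∑ k, (ε * c) * Δs k * β k = ∑ k, (ε * c) * (Δs k * β k) :=
            Finset.sum_congr rfl fun k _ => by ring
        _ = (ε * c) * ∑ k, Δs k * β k := (Finset.mul_sum _ _ _).symm
        _ = ε * c * gnorm G α p s β := by rw [hΔs2]
    have hNc : gnorm G (fun i => (α i)⁻¹) q t (fun k => (ε * c) * Δs k)
        = c * gnorm G (fun i => (α i)⁻¹) q t Δs := by
      rw [gnorm_smul hq ht, abs_mul, hε1, abs_of_nonneg hc]
      ring
    have hNsnn : 0 ≤ gnorm G (fun i => (α i)⁻¹) q t Δs := hNnn Δs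
    rw [hLc, hNc]
    have h1 : (ε * c * gnorm G α p s β) ^ 2 = c ^ 2 * (gnorm G α p s β) ^ 2 := by
      calc (ε * c * gnorm G α p s β) ^ 2
          = ε ^ 2 * (c ^ 2 * (gnorm G α p s β) ^ 2) := by ring
        _ = c ^ 2 * (gnorm G α p s β) ^ 2 := by rw [hεsq]; ring
    have h2 : -(2 * e * (ε * c * gnorm G α p s β)) = 2 * |e| * c * gnorm G α p s β := by
      calc -(2 * e * (ε * c * gnorm G α p s β)) = -(2 * e * ε) * (c * gnorm G α p s β) := by
            ring
        _ = 2 * |e| * c * gnorm G α p s β := by rw [hεe]; ring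
    have h3 : γ * (c * gnorm G (fun i => (α i)⁻¹) q t Δs) ^ 2 ≤ γ * c ^ 2 := by
      have hN2 : (gnorm G (fun i => (α i)⁻¹) q t Δs) ^ 2 ≤ 1 := by nlinarith
      have hsq : (c * gnorm G (fun i => (α i)⁻¹) q t Δs) ^ 2
          = c ^ 2 * (gnorm G (fun i => (α i)⁻¹) q t Δs) ^ 2 := by ring
      have : (c * gnorm G (fun i => (α i)⁻¹) q t Δs) ^ 2 ≤ c ^ 2 := by
        rw [hsq]
        nlinarith [sq_nonneg c]
      nlinarith
    nlinarith
  exact ⟨fun hlt => quadsup1 _ _ _ _ _ hγ hNnn hup hlow hBpos.le hlt,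
    fun hgt => quadsup2 _ _ _ _ _ hlow hBpos.le hgt,
    fun heq he => quadsup3 _ _ _ _ _ hlow hBpos heq he⟩
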